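/- Assume κ_i > Σ_{j=1}^p |λ_{ij}| for all i, and let θ be a critical point of f with s_k(θ) = 0 for all k (so c_k(θ) ∈ {−1, +1} for all k). If c_i(θ) = 1 for some i, the Hessian matrix H_f(θ) has a negative eigenvalue; if c_j(θ) = −1 for some j, H_f(θ) has a positive eigenvalue. In particular, any such critical point with coordinates of both signs is a saddle point (neither a local maximum nor a local minimum of f). -/

import Mathlib

open Real

/-- A real symmetric matrix with a negative diagonal entry has a negative eigenvalue. -/
lemma aux_neg_eig {p : ℕ} (H : Matrix (Fin p) (Fin p) ℝ) (hH : H.IsHermitian)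
    (i : Fin p) (hii : H i i < 0) :
    ∃ (v : Fin p → ℝ) (x : ℝ), v ≠ 0 ∧ H.mulVec v = x • v ∧ x < 0 := by
  by_contra hcon
  push_neg at hcon
  have hnn : ∀ k, 0 ≤ hH.eigenvalues k := by
    intro k
    have hv : (hH.eigenvectorBasis k : Fin p → ℝ) ≠ 0 := by
      have h0 := hH.eigenvectorBasis.orthonormal.ne_zero k
      intro h
      apply h0
      ext x
      exact congrFun h x
    exact hcon _ _ hv (hH.mulVec_eigenvectorBasis k)
  have hpsd := hH.posSemidef_iff_eigenvalues_nonneg.mpr hnn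
  have := hpsd.dotProduct_mulVec_nonneg (Pi.single i 1)
  simp [Matrix.mulVec, dotProduct, Pi.single_apply] at this
  linarith

/-- Under diagonal dominance `κᵢ > Σⱼ |λᵢⱼ|`, at a critical point `θ` with
`sₖ(θ) = 0` for all `k` (so `cₖ(θ) ∈ {-1, 1}`), the Hessian `H` of `f` has a
negative eigenvalue whenever some `cᵢ(θ) = 1` and a positive eigenvalue whenever
some `cⱼ(θ) = -1`; in particular a critical point with coordinates of both signs
is a saddle point (neither a local maximum nor a local minimum). -/
theorem stmt_8 (p : ℕ) (hp : 1 ≤ p) (μ κ : Fin p → ℝ)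
    (hκ : ∀ i, 0 ≤ κ i)
    (Λ : Matrix (Fin p) (Fin p) ℝ) (hΛsym : Λ.IsSymm)
    (hΛdiag : ∀ i, Λ i i = 0)
    (hdom : ∀ i, ∑ j, |Λ i j| < κ i)
    (f : (Fin p → ℝ) → ℝ)
    (hf : ∀ θ, f θ = ∑ i, κ i * Real.cos (θ i - μ i)
        + (1 / 2) * ∑ i, ∑ j, Real.sin (θ i - μ i) * Λ i j * Real.sin (θ j - μ j))
    (θ : Fin p → ℝ)
    (hcrit : ∀ i, -κ i * Real.sin (θ i - μ i)
        + Real.cos (θ i - μ i) * ∑ k, Λ i k * Real.sin (θ k - μ k) = 0)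
    (hs : ∀ k, Real.sin (θ k - μ k) = 0)
    (H : Matrix (Fin p) (Fin p) ℝ)
    (hH : ∀ i j, H i j =
      (if i = j then
        -(κ i * Real.cos (θ i - μ i)
          + Real.sin (θ i - μ i) * ∑ k, Λ i k * Real.sin (θ k - μ k))
      else 0)
      + Real.cos (θ i - μ i) * Λ i j * Real.cos (θ j - μ j)) :
    ((∃ i, Real.cos (θ i - μ i) = 1) →
      ∃ (v : Fin p → ℝ) (x : ℝ), v ≠ 0 ∧ H.mulVec v = x • v ∧ x < 0) ∧
    ((∃ j, Real.cos (θ j - μ j) = -1) →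
      ∃ (v : Fin p → ℝ) (x : ℝ), v ≠ 0 ∧ H.mulVec v = x • v ∧ 0 < x) ∧
    ((∃ i, Real.cos (θ i - μ i) = 1) → (∃ j, Real.cos (θ j - μ j) = -1) →
      ¬ IsLocalMax f θ ∧ ¬ IsLocalMin f θ) := by
  have hκpos : ∀ i, 0 < κ i := fun i =>
    lt_of_le_of_lt (Finset.sum_nonneg fun j _ => abs_nonneg _) (hdom i)
  -- diagonal entries of H
  have hdiag : ∀ i, H i i = -(κ i * Real.cos (θ i - μ i)) := by
    intro i
    rw [hH i i]
    simp [hs, hΛdiag]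
  -- H is Hermitian (symmetric real)
  have hHerm : H.IsHermitian := by
    refine Matrix.IsHermitian.ext fun i j => ?_
    rw [hH i j, hH j i]
    have : Λ j i = Λ i j := hΛsym.apply i j
    rw [star_trivial, this]
    by_cases h : i = j
    · subst h; ring
    · rw [if_neg h, if_neg (Ne.symm h)]; ring
  -- part 1
  have part1 : (∃ i, Real.cos (θ i - μ i) = 1) →
      ∃ (v : Fin p → ℝ) (x : ℝ), v ≠ 0 ∧ H.mulVec v = x • v ∧ x < 0 := by
    rintro ⟨i, hi⟩
    refine aux_neg_eig H hHerm i ?_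
    rw [hdiag i, hi]
    simpa using hκpos i
  -- part 2
  have part2 : (∃ j, Real.cos (θ j - μ j) = -1) →
      ∃ (v : Fin p → ℝ) (x : ℝ), v ≠ 0 ∧ H.mulVec v = x • v ∧ 0 < x := by
    rintro ⟨j, hj⟩
    have hHerm' : (-H).IsHermitian := hHerm.neg
    have hd : (-H) j j < 0 := by
      simp [hdiag j, hj]
      linarith [hκpos j]
    obtain ⟨v, x, hv, hmul, hx⟩ := aux_neg_eig (-H) hHerm' j hd
    refine ⟨v, -x, hv, ?_, by linarith⟩
    have : -(H.mulVec v) = x • v := by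
      rw [← hmul]; simp [Matrix.neg_mulVec]
    calc H.mulVec v = -(x • v) := by rw [← this]; ring_nf
      _ = (-x) • v := by ext k; simp
  -- evaluation of f along a coordinate perturbation
  have hft : ∀ (j : Fin p) (t : ℝ),
      f (Function.update θ j (θ j + t))
        = f θ + κ j * Real.cos (θ j - μ j) * (Real.cos t - 1) := by
    intro j t
    set g := Function.update θ j (θ j + t) with hg
    have hgj : g j = θ j + t := Function.update_self _ _ _
    have hgk : ∀ k, k ≠ j → g k = θ k := fun k hk => Function.update_of_ne hk _ _
    have hsing : ∀ k, k ≠ j → Real.sin (g k - μ k) = 0 := by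
      intro k hk; rw [hgk k hk]; exact hs k
    have hdouble : ∑ k, ∑ l, Real.sin (g k - μ k) * Λ k l * Real.sin (g l - μ l) = 0 := by
      refine Finset.sum_eq_zero fun k _ => Finset.sum_eq_zero fun l _ => ?_
      by_cases hk : k = j
      · by_cases hl : l = j
        · subst hk; subst hl; simp [hΛdiag]
        · rw [hsing l hl]; ring
      · rw [hsing k hk]; ring
    have hdouble0 : ∑ k, ∑ l, Real.sin (θ k - μ k) * Λ k l * Real.sin (θ l - μ l) = 0 := by
      refine Finset.sum_eq_zero fun k _ => Finset.sum_eq_zero fun l _ => ?_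
      rw [hs k]; ring
    have hsingle : ∑ k, κ k * Real.cos (g k - μ k)
        = ∑ k, κ k * Real.cos (θ k - μ k)
          + κ j * Real.cos (θ j - μ j) * (Real.cos t - 1) := by
      have : ∀ k, κ k * Real.cos (g k - μ k)
          = κ k * Real.cos (θ k - μ k)
            + (if k = j then κ j * Real.cos (θ j - μ j) * (Real.cos t - 1) else 0) := by
        intro k
        by_cases hk : k = j
        · subst hk
          rw [hgj, if_pos rfl]
          have harg : θ k + t - μ k = (θ k - μ k) + t := by ring
          rw [harg, Real.cos_add, hs k]
          ring
        · rw [hgk k hk, if_neg hk]; ring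
      rw [Finset.sum_congr rfl fun k _ => this k, Finset.sum_add_distrib,
        Finset.sum_ite_eq' Finset.univ j
          (fun _ => κ j * Real.cos (θ j - μ j) * (Real.cos t - 1))]
      simp
    rw [hf, hf, hdouble, hdouble0, hsingle]
    ring
  -- part 3
  refine ⟨part1, part2, fun ⟨i, hi⟩ ⟨j, hj⟩ => ⟨?_, ?_⟩⟩
  · -- not a local max, using c_j = -1 : f increases along coordinate j
    intro hmax
    have hcont : Filter.Tendsto (fun t : ℝ => Function.update θ j (θ j + t))
        (nhds 0) (nhds θ) := by
      have : Continuous (fun t : ℝ => Function.update θ j (θ j + t)) :=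
        continuous_const.update j (continuous_const.add continuous_id)
      have h0 : Function.update θ j (θ j + 0) = θ := by
        rw [add_zero]; exact Function.update_eq_self _ _
      simpa [h0] using this.tendsto 0
    have hev : ∀ᶠ t in nhds 0, f (Function.update θ j (θ j + t)) ≤ f θ :=
      hcont.eventually hmax
    have hev' : ∀ᶠ t in nhdsWithin (0:ℝ) (Set.Ioi 0),
        f (Function.update θ j (θ j + t)) ≤ f θ := hev.filter_mono nhdsWithin_le_nhds
    have hsmall : ∀ᶠ t in nhdsWithin (0:ℝ) (Set.Ioi 0), t ∈ Set.Ioo (0:ℝ) (2*π) := by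
      have : Set.Ioo (0:ℝ) (2*π) ∈ nhdsWithin (0:ℝ) (Set.Ioi 0) :=
        Ioo_mem_nhdsGT_of_mem (by constructor <;> [rfl; positivity])
      exact this
    obtain ⟨t, hle, ht⟩ := (hev'.and hsmall).exists
    have hcoslt : Real.cos t < 1 := by
      rcases lt_or_eq_of_le (Real.cos_le_one t) with h | h
      · exact h
      · exfalso
        rw [Real.cos_eq_one_iff_of_lt_of_lt (by linarith [ht.1, ht.2, Real.pi_pos])
          ht.2] at h
        exact absurd h (ne_of_gt ht.1)
    rw [hft j t, hj] at hle
    nlinarith [hκpos j]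
  · -- not a local min, using c_i = 1 : f decreases along coordinate i
    intro hmin
    have hcont : Filter.Tendsto (fun t : ℝ => Function.update θ i (θ i + t))
        (nhds 0) (nhds θ) := by
      have : Continuous (fun t : ℝ => Function.update θ i (θ i + t)) :=
        continuous_const.update i (continuous_const.add continuous_id)
      have h0 : Function.update θ i (θ i + 0) = θ := by
        rw [add_zero]; exact Function.update_eq_self _ _
      simpa [h0] using this.tendsto 0
    have hev : ∀ᶠ t in nhds 0, f θ ≤ f (Function.update θ i (θ i + t)) :=
      hcont.eventually hmin
    have hev' : ∀ᶠ t in nhdsWithin (0:ℝ) (Set.Ioi 0),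
        f θ ≤ f (Function.update θ i (θ i + t)) := hev.filter_mono nhdsWithin_le_nhds
    have hsmall : ∀ᶠ t in nhdsWithin (0:ℝ) (Set.Ioi 0), t ∈ Set.Ioo (0:ℝ) (2*π) := by
      have : Set.Ioo (0:ℝ) (2*π) ∈ nhdsWithin (0:ℝ) (Set.Ioi 0) :=
        Ioo_mem_nhdsGT_of_mem (by constructor <;> [rfl; positivity])
      exact this
    obtain ⟨t, hle, ht⟩ := (hev'.and hsmall).exists
    have hcoslt : Real.cos t < 1 := by
      rcases lt_or_eq_of_le (Real.cos_le_one t) with h | h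
      · exact h
      · exfalso
        rw [Real.cos_eq_one_iff_of_lt_of_lt (by linarith [ht.1, ht.2, Real.pi_pos])
          ht.2] at h
        exact absurd h (ne_of_gt ht.1)
    rw [hft i t, hi] at hle
    nlinarith [hκpos i]
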